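/- arXiv:1707.06837 — 11 statements merged into one kernel-verified Lean document; each statement's English description precedes it below -/
import Mathlib

section
/- Let Y be a vector in ℝⁿ and b₀ a vector in ℝᵐ. Then the GLS estimator of the stacked time-varying-parameter regression satisfies the identity (Zᵀ H⁻¹ Z + C⁻ᵀ Q⁻¹ C⁻¹)⁻¹ (Zᵀ H⁻¹ Y + C⁻ᵀ Q⁻¹ b₀) = C b₀ + C Q Cᵀ Zᵀ Ω⁻¹ (Y − Z C b₀); that is, the GLS estimate of the stacked coefficient vector equals the Kalman-smoothed estimate (Proposition 1, estimate part). -/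
open Matrix

/-- Auxiliary: conjugation of a positive definite matrix by an invertible
matrix (over ℝ, using transpose) is positive definite. -/
lemma posDef_transpose_mul_mul {m : ℕ} {A B : Matrix (Fin m) (Fin m) ℝ}
    (hA : A.PosDef) (hB : IsUnit B) : (Bᵀ * A * B).PosDef := by
  have hBt : Bᴴ = Bᵀ := by ext i j; simp [conjTranspose_apply]
  refine Matrix.PosDef.of_dotProduct_mulVec_pos ?_ ?_
  · rw [← hBt]; exact isHermitian_conjTranspose_mul_mul B hA.1
  · intro x hx
    have hx' : B *ᵥ x ≠ 0 := fun h => hx (by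
      haveI := hB.invertible
      have h2 := congrArg (fun v => B⁻¹ *ᵥ v) h
      simpa [Matrix.mulVec_mulVec, Matrix.inv_mul_of_invertible] using h2)
    have := hA.dotProduct_mulVec_pos hx'
    simpa only [← hBt, star_mulVec, dotProduct_mulVec, vecMul_vecMul] using this

/-- Proposition 1 (estimate part): the GLS estimator of the stacked
time-varying-parameter regression equals the Kalman-smoothed estimate. -/
theorem gls_equals_kalman_smoother_estimate
    (n m : ℕ)
    (H : Matrix (Fin n) (Fin n) ℝ) (Q : Matrix (Fin m) (Fin m) ℝ)
    (C : Matrix (Fin m) (Fin m) ℝ) (Z : Matrix (Fin n) (Fin m) ℝ)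
    (hH : H.PosDef) (hQ : Q.PosDef) (hC : IsUnit C)
    (Ω : Matrix (Fin n) (Fin n) ℝ) (hΩ : Ω = H + Z * C * Q * Cᵀ * Zᵀ)
    (G : Matrix (Fin m) (Fin m) ℝ) (hG : G = Zᵀ * H⁻¹ * Z + C⁻¹ᵀ * Q⁻¹ * C⁻¹)
    (Y : Fin n → ℝ) (b₀ : Fin m → ℝ) :
    G⁻¹ *ᵥ ((Zᵀ * H⁻¹) *ᵥ Y + (C⁻¹ᵀ * Q⁻¹) *ᵥ b₀)
      = C *ᵥ b₀ + (C * Q * Cᵀ * Zᵀ * Ω⁻¹) *ᵥ (Y - (Z * C) *ᵥ b₀) := by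
  have htr : ∀ {k l : ℕ} (A : Matrix (Fin k) (Fin l) ℝ), Aᴴ = Aᵀ := fun A => by
    ext i j; simp [conjTranspose_apply]
  rw [transpose_nonsing_inv] at hG ⊢
  haveI := hC.invertible
  haveI := hH.isUnit.invertible
  haveI := hQ.isUnit.invertible
  have hCt : IsUnit Cᵀ := (isUnit_iff_isUnit_det _).2 (by rw [det_transpose]; exact (isUnit_iff_isUnit_det _).1 hC)
  haveI := hCt.invertible
  -- Ω is positive definite
  have hΩpd : Ω.PosDef := by
    rw [hΩ]
    refine hH.add_posSemidef ?_
    have h1 : (Z * C * Q * Cᵀ * Zᵀ) = (Z * C) * Q * (Z * C)ᴴ := by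
      simp only [htr, transpose_mul, Matrix.mul_assoc]
    rw [h1]
    exact hQ.posSemidef.mul_mul_conjTranspose_same (Z * C)
  -- G is positive definite
  have hGpd : G.PosDef := by
    rw [hG]
    have h1 : (Zᵀ * H⁻¹ * Z).PosSemidef := by
      have := hH.inv.posSemidef.conjTranspose_mul_mul_same Z
      rwa [htr Z] at this
    have h2 : (Cᵀ⁻¹ * Q⁻¹ * C⁻¹).PosDef := by
      have : Cᵀ⁻¹ * Q⁻¹ * C⁻¹ = (C⁻¹)ᵀ * Q⁻¹ * C⁻¹ := by rw [transpose_nonsing_inv]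
      rw [this]
      exact posDef_transpose_mul_mul hQ.inv ((Matrix.isUnit_nonsing_inv_iff).2 hC)
    exact Matrix.PosDef.posSemidef_add h1 h2
  haveI := hΩpd.isUnit.invertible
  haveI := hGpd.isUnit.invertible
  -- Key identity 1
  have key1 : G * (C * Q * Cᵀ * Zᵀ) = Zᵀ * H⁻¹ * Ω := by
    rw [hG, hΩ]
    simp only [Matrix.add_mul, Matrix.mul_add, Matrix.mul_assoc]
    simp only [Matrix.inv_mul_cancel_left_of_invertible, Matrix.inv_mul_of_invertible,
      Matrix.mul_one]
    abel
  have key1' : C * Q * Cᵀ * Zᵀ * Ω⁻¹ = G⁻¹ * (Zᵀ * H⁻¹) := by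
    have h := congrArg (fun M => G⁻¹ * M * Ω⁻¹) key1
    simp only [Matrix.mul_assoc, Matrix.inv_mul_cancel_left_of_invertible,
      Matrix.mul_inv_cancel_left_of_invertible, Matrix.mul_inv_of_invertible,
      Matrix.mul_one] at h
    simpa only [Matrix.mul_assoc] using h
  -- Key identity 2
  have key2 : G⁻¹ * (Cᵀ⁻¹ * Q⁻¹) = C - G⁻¹ * (Zᵀ * H⁻¹) * (Z * C) := by
    have e : G * C = Zᵀ * H⁻¹ * (Z * C) + Cᵀ⁻¹ * Q⁻¹ := by
      rw [hG]
      simp only [Matrix.add_mul, Matrix.mul_assoc, Matrix.inv_mul_of_invertible, Matrix.mul_one]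
    have e' : Cᵀ⁻¹ * Q⁻¹ = G * C - Zᵀ * H⁻¹ * (Z * C) := by rw [e]; abel
    rw [e', mul_sub]
    simp only [Matrix.mul_assoc, Matrix.inv_mul_cancel_left_of_invertible]
  -- finish
  rw [mulVec_add, mulVec_mulVec, mulVec_mulVec, key2, ← key1',
    sub_mulVec, mulVec_sub, mulVec_mulVec]
  abel
end

section
/- The inverse of the GLS normal matrix equals the Kalman-smoother mean-squared-error matrix: (Zᵀ H⁻¹ Z + C⁻ᵀ Q⁻¹ C⁻¹)⁻¹ = C Q Cᵀ − C Q Cᵀ Zᵀ Ω⁻¹ Z C Q Cᵀ (Proposition 1, mean-squared-error part). -/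
open Matrix

/-- Proposition 1 (MSE part): the inverse of the GLS normal matrix equals the
Kalman-smoother mean-squared-error matrix. -/
theorem gls_normal_matrix_inverse_eq_kalman_mse
    (n m : ℕ)
    (H : Matrix (Fin n) (Fin n) ℝ) (Q : Matrix (Fin m) (Fin m) ℝ)
    (C : Matrix (Fin m) (Fin m) ℝ) (Z : Matrix (Fin n) (Fin m) ℝ)
    (hH : H.PosDef) (hQ : Q.PosDef) (hC : IsUnit C)
    (Ω : Matrix (Fin n) (Fin n) ℝ) (hΩ : Ω = H + Z * C * Q * Cᵀ * Zᵀ)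
    (G : Matrix (Fin m) (Fin m) ℝ) (hG : G = Zᵀ * H⁻¹ * Z + C⁻¹ᵀ * Q⁻¹ * C⁻¹) :
    G⁻¹ = C * Q * Cᵀ - C * Q * Cᵀ * Zᵀ * Ω⁻¹ * Z * C * Q * Cᵀ := by
  set P : Matrix (Fin m) (Fin m) ℝ := C * Q * Cᵀ with hP
  have hCT : IsUnit Cᵀ := (Matrix.isUnit_transpose C).mpr hC
  have hQu : IsUnit Q := hQ.isUnit
  have hPu : IsUnit P := (hC.mul hQu).mul hCT
  have hPinv : P⁻¹ = C⁻¹ᵀ * Q⁻¹ * C⁻¹ := by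
    rw [hP, Matrix.mul_inv_rev, Matrix.mul_inv_rev, transpose_nonsing_inv]
    simp [Matrix.mul_assoc]
  have hGP : G = P⁻¹ + Zᵀ * H⁻¹ * Z := by
    rw [hG, hPinv, add_comm]
  have hHu : IsUnit H := hH.isUnit
  have hHinv : IsUnit H⁻¹ := (Matrix.isUnit_iff_isUnit_det _).mpr (Matrix.isUnit_nonsing_inv_det _ ((Matrix.isUnit_iff_isUnit_det _).mp hHu))
  have hΩu : IsUnit ((H⁻¹)⁻¹ + Z * P⁻¹⁻¹ * Zᵀ) := by
    rw [Matrix.nonsing_inv_nonsing_inv _ ((Matrix.isUnit_iff_isUnit_det _).mp hHu),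
        Matrix.nonsing_inv_nonsing_inv _ ((Matrix.isUnit_iff_isUnit_det _).mp hPu)]
    · have : H + Z * P * Zᵀ = Ω := by rw [hΩ, hP]; simp [Matrix.mul_assoc]
      rw [this]
      have hΩpd : Ω.PosDef := by
        rw [hΩ]
        have h1 : (Z * C * Q * Cᵀ * Zᵀ) = (Z * C) * Q * (Z * C)ᵀ := by
          rw [transpose_mul]; simp [Matrix.mul_assoc]
        rw [h1]
        exact hH.add_posSemidef (hQ.posSemidef.mul_mul_conjTranspose_same (Z * C))
      exact hΩpd.isUnit
  have key := Matrix.add_mul_mul_inv_eq_sub P⁻¹ Zᵀ H⁻¹ Z ((Matrix.isUnit_iff_isUnit_det _).mpr (Matrix.isUnit_nonsing_inv_det _ ((Matrix.isUnit_iff_isUnit_det _).mp hPu))) hHinv hΩu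
  rw [Matrix.nonsing_inv_nonsing_inv _ ((Matrix.isUnit_iff_isUnit_det _).mp hHu),
      Matrix.nonsing_inv_nonsing_inv _ ((Matrix.isUnit_iff_isUnit_det _).mp hPu)] at key
  have hΩ' : H + Z * P * Zᵀ = Ω := by rw [hΩ, hP]; simp [Matrix.mul_assoc]
  rw [hΩ'] at key
  rw [hGP, key, hP]
  simp [Matrix.mul_assoc]
end

section
/- The Schur complement of the block normal matrix satisfies F := Jᵀ H⁻¹ J − (Jᵀ H⁻¹ Z) G⁻¹ (Zᵀ H⁻¹ J) = Jᵀ Ω⁻¹ J; consequently F is invertible with F⁻¹ = (Jᵀ Ω⁻¹ J)⁻¹ whenever Jᵀ Ω⁻¹ J is invertible. -/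
open Matrix

private lemma conjT_mul_mul_posDef {m : ℕ} (Q B : Matrix (Fin m) (Fin m) ℝ)
    (hQ : Q.PosDef) (hB : IsUnit B) : (Bᴴ * Q * B).PosDef := by
  refine Matrix.PosDef.of_dotProduct_mulVec_pos (Matrix.isHermitian_conjTranspose_mul_mul B hQ.1) fun x hx => ?_
  have hBx : B *ᵥ x ≠ 0 := by
    intro h
    exact hx (by simpa using Matrix.mulVec_injective_iff_isUnit.mpr hB (h.trans (by simp)))
  simpa only [star_mulVec, dotProduct_mulVec, vecMul_vecMul] using hQ.dotProduct_mulVec_pos hBx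

/-- The Schur complement F = Jᵀ H⁻¹ J − (Jᵀ H⁻¹ Z) G⁻¹ (Zᵀ H⁻¹ J) equals
Jᵀ Ω⁻¹ J; consequently F is invertible with F⁻¹ = (Jᵀ Ω⁻¹ J)⁻¹ whenever
Jᵀ Ω⁻¹ J is invertible. -/
theorem schur_complement_eq_JT_omega_inv_J
    (n m k : ℕ)
    (H : Matrix (Fin n) (Fin n) ℝ) (Q : Matrix (Fin m) (Fin m) ℝ)
    (C : Matrix (Fin m) (Fin m) ℝ) (Z : Matrix (Fin n) (Fin m) ℝ)
    (J : Matrix (Fin n) (Fin k) ℝ)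
    (hH : H.PosDef) (hQ : Q.PosDef) (hC : IsUnit C)
    (Ω : Matrix (Fin n) (Fin n) ℝ) (hΩ : Ω = H + Z * C * Q * Cᵀ * Zᵀ)
    (G : Matrix (Fin m) (Fin m) ℝ) (hG : G = Zᵀ * H⁻¹ * Z + C⁻¹ᵀ * Q⁻¹ * C⁻¹)
    (F : Matrix (Fin k) (Fin k) ℝ)
    (hF : F = Jᵀ * H⁻¹ * J - (Jᵀ * H⁻¹ * Z) * G⁻¹ * (Zᵀ * H⁻¹ * J)) :
    F = Jᵀ * Ω⁻¹ * J ∧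
      (IsUnit (Jᵀ * Ω⁻¹ * J) → IsUnit F ∧ F⁻¹ = (Jᵀ * Ω⁻¹ * J)⁻¹) := by
  have hCT : IsUnit Cᵀ := by
    rw [Matrix.isUnit_iff_isUnit_det, Matrix.det_transpose,
      ← Matrix.isUnit_iff_isUnit_det]
    exact hC
  have hCinv : IsUnit C⁻¹ := Matrix.isUnit_nonsing_inv_iff.mpr hC
  have hCQC : IsUnit (C * Q * Cᵀ) := (hC.mul hQ.isUnit).mul hCT
  -- (C*Q*Cᵀ)⁻¹ = C⁻¹ᵀ * Q⁻¹ * C⁻¹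
  have hinv : (C * Q * Cᵀ)⁻¹ = C⁻¹ᵀ * Q⁻¹ * C⁻¹ := by
    rw [Matrix.mul_inv_rev, Matrix.mul_inv_rev, ← Matrix.transpose_nonsing_inv,
      Matrix.mul_assoc]
  have hctt : (C⁻¹)ᴴ = C⁻¹ᵀ := Matrix.conjTranspose_eq_transpose_of_trivial _
  have hztt : Zᴴ = Zᵀ := Matrix.conjTranspose_eq_transpose_of_trivial _
  have hGpd : G.PosDef := by
    rw [hG]
    refine Matrix.PosDef.posSemidef_add ?_ ?_
    · simpa [hztt] using hH.inv.posSemidef.conjTranspose_mul_mul_same Z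
    · simpa [hctt] using conjT_mul_mul_posDef Q⁻¹ C⁻¹ hQ.inv hCinv
  have hGeq : (C * Q * Cᵀ)⁻¹ + Zᵀ * H⁻¹ * Z = G := by
    rw [hinv, hG, add_comm]
  have hΩinv : Ω⁻¹ = H⁻¹ - H⁻¹ * Z * G⁻¹ * Zᵀ * H⁻¹ := by
    have := Matrix.add_mul_mul_inv_eq_sub H Z (C * Q * Cᵀ) Zᵀ hH.isUnit hCQC
      (by rw [hGeq]; exact hGpd.isUnit)
    rw [hΩ]
    rw [show H + Z * C * Q * Cᵀ * Zᵀ = H + Z * (C * Q * Cᵀ) * Zᵀ by simp [Matrix.mul_assoc]]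
    rw [this, hGeq]
  have h1 : F = Jᵀ * Ω⁻¹ * J := by
    rw [hΩinv, hF]
    simp only [Matrix.mul_sub, Matrix.sub_mul, Matrix.mul_assoc]
  exact ⟨h1, fun hu => ⟨h1 ▸ hu, by rw [h1]⟩⟩
end

section
/- With B = Jᵀ H⁻¹ Z and F = Jᵀ H⁻¹ J − B G⁻¹ (Zᵀ H⁻¹ J) assumed invertible, the following identity holds: F⁻¹ Jᵀ H⁻¹ − F⁻¹ B G⁻¹ Zᵀ H⁻¹ = (Jᵀ Ω⁻¹ J)⁻¹ Jᵀ Ω⁻¹ (appendix claim 1 in the proof of Proposition 2). -/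
open Matrix

/-- Conjugating a positive definite real matrix by an invertible matrix
preserves positive definiteness. -/
lemma posDef_transpose_mul_mul_s7 {m : Type*} [Fintype m] [DecidableEq m]
    {Q C : Matrix m m ℝ} (hQ : Q.PosDef) (hC : IsUnit C) :
    (Cᵀ * Q * C).PosDef := by
  have h := hQ.posSemidef.conjTranspose_mul_mul_same C
  rw [conjTranspose_eq_transpose_of_trivial] at h
  refine PosDef.of_dotProduct_mulVec_pos h.1 fun x hx => ?_
  have hCx : C *ᵥ x ≠ 0 :=
    (Matrix.mulVec_injective_iff_isUnit.mpr hC).ne_iff' (Matrix.mulVec_zero C) |>.2 hx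
  have := hQ.dotProduct_mulVec_pos hCx
  simpa only [← conjTranspose_eq_transpose_of_trivial, star_mulVec, dotProduct_mulVec,
    vecMul_vecMul] using this

/-- Appendix claim 1 in the proof of Proposition 2:
F⁻¹ Jᵀ H⁻¹ − F⁻¹ B G⁻¹ Zᵀ H⁻¹ = (Jᵀ Ω⁻¹ J)⁻¹ Jᵀ Ω⁻¹. -/
theorem appendix_claim_1
    (n m k : ℕ)
    (H : Matrix (Fin n) (Fin n) ℝ) (Q : Matrix (Fin m) (Fin m) ℝ)
    (C : Matrix (Fin m) (Fin m) ℝ) (Z : Matrix (Fin n) (Fin m) ℝ)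
    (J : Matrix (Fin n) (Fin k) ℝ)
    (hH : H.PosDef) (hQ : Q.PosDef) (hC : IsUnit C)
    (Ω : Matrix (Fin n) (Fin n) ℝ) (hΩ : Ω = H + Z * C * Q * Cᵀ * Zᵀ)
    (G : Matrix (Fin m) (Fin m) ℝ) (hG : G = Zᵀ * H⁻¹ * Z + C⁻¹ᵀ * Q⁻¹ * C⁻¹)
    (hJ : IsUnit (Jᵀ * Ω⁻¹ * J))
    (B : Matrix (Fin k) (Fin m) ℝ) (hB : B = Jᵀ * H⁻¹ * Z)
    (F : Matrix (Fin k) (Fin k) ℝ)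
    (hF : F = Jᵀ * H⁻¹ * J - B * G⁻¹ * (Zᵀ * H⁻¹ * J))
    (hFu : IsUnit F) :
    F⁻¹ * Jᵀ * H⁻¹ - F⁻¹ * B * G⁻¹ * Zᵀ * H⁻¹ = (Jᵀ * Ω⁻¹ * J)⁻¹ * Jᵀ * Ω⁻¹ := by
  have hCt : IsUnit Cᵀ := (Matrix.isUnit_transpose C).mpr hC
  -- M := C * Q * Cᵀ is positive definite
  have hCQCt : (C * Q * Cᵀ).PosDef := by
    have := posDef_transpose_mul_mul_s7 hQ hCt
    rwa [transpose_transpose] at this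
  have hMu : IsUnit (C * Q * Cᵀ) := hCQCt.isUnit
  -- G = (CQCᵀ)⁻¹ + Zᵀ H⁻¹ Z
  have hGeq : G = (C * Q * Cᵀ)⁻¹ + Zᵀ * H⁻¹ * Z := by
    rw [hG, Matrix.mul_inv_rev, Matrix.mul_inv_rev, transpose_nonsing_inv, add_comm,
      mul_assoc]
  -- G is posdef hence a unit
  have hGpd : G.PosDef := by
    rw [hGeq]
    refine hCQCt.inv.add_posSemidef ?_
    have := hH.inv.posSemidef.conjTranspose_mul_mul_same Z
    rwa [conjTranspose_eq_transpose_of_trivial] at this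
  have hGu : IsUnit G := hGpd.isUnit
  -- Woodbury
  have hW : Ω⁻¹ = H⁻¹ - H⁻¹ * Z * G⁻¹ * Zᵀ * H⁻¹ := by
    have := Matrix.add_mul_mul_inv_eq_sub H Z (C * Q * Cᵀ) Zᵀ hH.isUnit hMu
      (by rw [← hGeq]; exact hGu)
    rw [← hGeq] at this
    rw [hΩ]
    convert this using 3 <;> simp [Matrix.mul_assoc]
  -- Jᵀ Ω⁻¹ J = F
  have hJF : Jᵀ * Ω⁻¹ * J = F := by
    rw [hW, hF, hB]
    simp only [Matrix.mul_sub, Matrix.sub_mul, Matrix.mul_assoc]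
  rw [hJF, hW, hB]
  simp only [Matrix.mul_sub, Matrix.sub_mul, Matrix.mul_assoc]
end

section
/- With B = Jᵀ H⁻¹ Z and F = Jᵀ H⁻¹ J − B G⁻¹ (Zᵀ H⁻¹ J) assumed invertible, the following identity holds: F⁻¹ B G⁻¹ C⁻ᵀ Q⁻¹ = (Jᵀ Ω⁻¹ J)⁻¹ Jᵀ Ω⁻¹ Z C (appendix claim 2 in the proof of Proposition 2). -/
open Matrix

private lemma posDef_conj_aux {m : ℕ} {M A : Matrix (Fin m) (Fin m) ℝ}
    (hM : M.PosDef) (hA : IsUnit A) : (Aᵀ * M * A).PosDef := by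
  refine Matrix.PosDef.of_dotProduct_mulVec_pos ?_ ?_
  · have := (hM.posSemidef.conjTranspose_mul_mul_same A).isHermitian
    simpa [Matrix.conjTranspose_eq_transpose_of_trivial] using this
  · intro x hx
    have hAx : A *ᵥ x ≠ 0 :=
      ((Matrix.mulVec_injective_iff_isUnit.mpr hA).ne_iff' (Matrix.mulVec_zero A)).2 hx
    have h := hM.dotProduct_mulVec_pos hAx
    have e : (star x) ⬝ᵥ ((Aᵀ * M * A) *ᵥ x) = (star (A *ᵥ x)) ⬝ᵥ (M *ᵥ (A *ᵥ x)) := by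
      simp [Matrix.mul_assoc, ← Matrix.mulVec_mulVec, Matrix.dotProduct_mulVec,
        Matrix.vecMul_transpose]
    rw [e]; exact h

/-- Appendix claim 2 in the proof of Proposition 2:
F⁻¹ B G⁻¹ C⁻ᵀ Q⁻¹ = (Jᵀ Ω⁻¹ J)⁻¹ Jᵀ Ω⁻¹ Z C. -/
theorem appendix_claim_2
    (n m k : ℕ)
    (H : Matrix (Fin n) (Fin n) ℝ) (Q : Matrix (Fin m) (Fin m) ℝ)
    (C : Matrix (Fin m) (Fin m) ℝ) (Z : Matrix (Fin n) (Fin m) ℝ)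
    (J : Matrix (Fin n) (Fin k) ℝ)
    (hH : H.PosDef) (hQ : Q.PosDef) (hC : IsUnit C)
    (Ω : Matrix (Fin n) (Fin n) ℝ) (hΩ : Ω = H + Z * C * Q * Cᵀ * Zᵀ)
    (G : Matrix (Fin m) (Fin m) ℝ) (hG : G = Zᵀ * H⁻¹ * Z + C⁻¹ᵀ * Q⁻¹ * C⁻¹)
    (hJ : IsUnit (Jᵀ * Ω⁻¹ * J))
    (B : Matrix (Fin k) (Fin m) ℝ) (hB : B = Jᵀ * H⁻¹ * Z)
    (F : Matrix (Fin k) (Fin k) ℝ)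
    (hF : F = Jᵀ * H⁻¹ * J - B * G⁻¹ * (Zᵀ * H⁻¹ * J))
    (hFu : IsUnit F) :
    F⁻¹ * B * G⁻¹ * C⁻¹ᵀ * Q⁻¹ = (Jᵀ * Ω⁻¹ * J)⁻¹ * Jᵀ * Ω⁻¹ * Z * C := by
  haveI := hH.isUnit.invertible
  haveI := hQ.isUnit.invertible
  haveI := hC.invertible
  have hCt : IsUnit Cᵀ := by
    rw [Matrix.isUnit_iff_isUnit_det, Matrix.det_transpose]
    exact (Matrix.isUnit_iff_isUnit_det C).1 hC
  haveI := hCt.invertible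
  have hCi : IsUnit C⁻¹ := Matrix.isUnit_nonsing_inv_iff.2 hC
  -- G is positive definite
  have hGpd : G.PosDef := by
    rw [hG]
    refine Matrix.PosDef.posSemidef_add ?_ (posDef_conj_aux hQ.inv hCi)
    have := hH.inv.posSemidef.conjTranspose_mul_mul_same Z
    simpa [Matrix.conjTranspose_eq_transpose_of_trivial] using this
  haveI := hGpd.isUnit.invertible
  -- Ω is positive definite
  have hΩpd : Ω.PosDef := by
    rw [hΩ]
    refine hH.add_posSemidef ?_
    have := hQ.posSemidef.mul_mul_conjTranspose_same (Z * C)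
    simpa [Matrix.conjTranspose_eq_transpose_of_trivial, Matrix.transpose_mul,
      Matrix.mul_assoc] using this
  haveI := hΩpd.isUnit.invertible
  -- key product computation
  have h2 : Ω * (H⁻¹ * Z) = Z * C * Q * Cᵀ * G := by
    rw [hΩ, hG]
    simp [Matrix.add_mul, Matrix.mul_add, Matrix.mul_assoc, Matrix.transpose_nonsing_inv,
      Matrix.mul_inv_cancel_left_of_invertible]
    rw [add_comm]
  have key1 : Ω * (H⁻¹ * Z * G⁻¹ * (C⁻¹ᵀ * Q⁻¹)) = Z * C := by
    have : Ω * (H⁻¹ * Z * G⁻¹ * (C⁻¹ᵀ * Q⁻¹)) = (Ω * (H⁻¹ * Z)) * G⁻¹ * (C⁻¹ᵀ * Q⁻¹) := by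
      simp [Matrix.mul_assoc]
    rw [this, h2]
    simp [Matrix.mul_assoc, Matrix.transpose_nonsing_inv, Matrix.mul_inv_cancel_left_of_invertible]
  have key3 : H⁻¹ * Z * G⁻¹ * (C⁻¹ᵀ * Q⁻¹) = Ω⁻¹ * (Z * C) := by
    rw [← key1, Matrix.inv_mul_cancel_left_of_invertible]
  -- Woodbury
  have hW : Ω⁻¹ = H⁻¹ - H⁻¹ * Z * G⁻¹ * (Zᵀ * H⁻¹) := by
    apply Matrix.inv_eq_right_inv
    have e1 : Ω * (H⁻¹ * Z * G⁻¹ * (Zᵀ * H⁻¹)) = Z * C * Q * Cᵀ * (Zᵀ * H⁻¹) := by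
      have : Ω * (H⁻¹ * Z * G⁻¹ * (Zᵀ * H⁻¹)) = (Ω * (H⁻¹ * Z)) * G⁻¹ * (Zᵀ * H⁻¹) := by
        simp [Matrix.mul_assoc]
      rw [this, h2]
      simp [Matrix.mul_assoc, Matrix.mul_inv_cancel_left_of_invertible]
    rw [Matrix.mul_sub, e1, hΩ]
    simp [Matrix.add_mul, Matrix.mul_assoc]
  -- F = Jᵀ Ω⁻¹ J
  have hFΩ : F = Jᵀ * Ω⁻¹ * J := by
    rw [hF, hB, hW]
    simp [Matrix.mul_sub, Matrix.sub_mul, Matrix.mul_assoc]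
  rw [← hFΩ, hB]
  have key3' : H⁻¹ * (Z * (G⁻¹ * (C⁻¹ᵀ * Q⁻¹))) = Ω⁻¹ * (Z * C) := by
    simpa [Matrix.mul_assoc] using key3
  simp only [Matrix.mul_assoc, key3']
end

section
/- With B = Jᵀ H⁻¹ Z, E = Zᵀ H⁻¹ J, and F = Jᵀ H⁻¹ J − B G⁻¹ E assumed invertible, the following identity holds: −G⁻¹ E F⁻¹ Jᵀ H⁻¹ + (G⁻¹ + G⁻¹ E F⁻¹ B G⁻¹) Zᵀ H⁻¹ = C Q Cᵀ Zᵀ Ω⁻¹ (I − J (Jᵀ Ω⁻¹ J)⁻¹ Jᵀ Ω⁻¹), where I is the n×n identity matrix (appendix claim 3 in the proof of Proposition 2). -/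
open Matrix

lemma aux_posdef_conj {m : ℕ} (Q A : Matrix (Fin m) (Fin m) ℝ)
    (hQ : Q.PosDef) (hA : IsUnit A) : (Aᵀ * Q * A).PosDef := by
  rw [Matrix.posDef_iff_dotProduct_mulVec]
  constructor
  · show (Aᵀ * Q * A)ᴴ = _
    have hQs : Qᵀ = Q := by
      simpa [conjTranspose_eq_transpose_of_trivial] using hQ.isHermitian.eq
    simp [conjTranspose_eq_transpose_of_trivial, transpose_mul, hQs, Matrix.mul_assoc]
  · intro x hx
    have hAx : A *ᵥ x ≠ 0 := by
      intro h
      apply hx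
      have := congrArg (fun v => A⁻¹ *ᵥ v) h
      simpa [Matrix.mulVec_mulVec, Matrix.nonsing_inv_mul A ((Matrix.isUnit_iff_isUnit_det A).mp hA)] using this
    have key : star x ⬝ᵥ ((Aᵀ * Q * A) *ᵥ x) = star (A *ᵥ x) ⬝ᵥ (Q *ᵥ (A *ᵥ x)) := by
      simp [star_trivial, ← Matrix.mulVec_mulVec, Matrix.dotProduct_mulVec,
        Matrix.vecMul_transpose]
    rw [key]
    exact hQ.dotProduct_mulVec_pos hAx

/-- Appendix claim 3 in the proof of Proposition 2:
−G⁻¹ E F⁻¹ Jᵀ H⁻¹ + (G⁻¹ + G⁻¹ E F⁻¹ B G⁻¹) Zᵀ H⁻¹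
  = C Q Cᵀ Zᵀ Ω⁻¹ (I − J (Jᵀ Ω⁻¹ J)⁻¹ Jᵀ Ω⁻¹). -/
theorem appendix_claim_3
    (n m k : ℕ)
    (H : Matrix (Fin n) (Fin n) ℝ) (Q : Matrix (Fin m) (Fin m) ℝ)
    (C : Matrix (Fin m) (Fin m) ℝ) (Z : Matrix (Fin n) (Fin m) ℝ)
    (J : Matrix (Fin n) (Fin k) ℝ)
    (hH : H.PosDef) (hQ : Q.PosDef) (hC : IsUnit C)
    (Ω : Matrix (Fin n) (Fin n) ℝ) (hΩ : Ω = H + Z * C * Q * Cᵀ * Zᵀ)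
    (G : Matrix (Fin m) (Fin m) ℝ) (hG : G = Zᵀ * H⁻¹ * Z + C⁻¹ᵀ * Q⁻¹ * C⁻¹)
    (hJ : IsUnit (Jᵀ * Ω⁻¹ * J))
    (B : Matrix (Fin k) (Fin m) ℝ) (hB : B = Jᵀ * H⁻¹ * Z)
    (E : Matrix (Fin m) (Fin k) ℝ) (hE : E = Zᵀ * H⁻¹ * J)
    (F : Matrix (Fin k) (Fin k) ℝ)
    (hF : F = Jᵀ * H⁻¹ * J - B * G⁻¹ * E)
    (hFu : IsUnit F) :
    -(G⁻¹ * E * F⁻¹ * Jᵀ * H⁻¹) + (G⁻¹ + G⁻¹ * E * F⁻¹ * B * G⁻¹) * Zᵀ * H⁻¹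
      = C * Q * Cᵀ * Zᵀ * Ω⁻¹ * (1 - J * (Jᵀ * Ω⁻¹ * J)⁻¹ * Jᵀ * Ω⁻¹) := by
  -- invertibility facts
  have hHd : IsUnit H.det := (Matrix.isUnit_iff_isUnit_det H).mp hH.isUnit
  have hCinv : IsUnit C⁻¹ := Matrix.isUnit_nonsing_inv_iff.mpr hC
  have hQinv : Q⁻¹.PosDef := hQ.inv
  -- G is positive definite
  have hGsemi : (Zᵀ * H⁻¹ * Z).PosSemidef := by
    have := (hH.inv.posSemidef).conjTranspose_mul_mul_same Z
    simpa [conjTranspose_eq_transpose_of_trivial] using this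
  have hGpd : G.PosDef := by
    rw [hG]
    exact Matrix.PosDef.posSemidef_add hGsemi (aux_posdef_conj Q⁻¹ C⁻¹ hQinv hCinv)
  have hGd : IsUnit G.det := (Matrix.isUnit_iff_isUnit_det G).mp hGpd.isUnit
  have hH1 : H * H⁻¹ = 1 := Matrix.mul_nonsing_inv H hHd
  have hH2 : H⁻¹ * H = 1 := Matrix.nonsing_inv_mul H hHd
  have hG1 : G * G⁻¹ = 1 := Matrix.mul_nonsing_inv G hGd
  have hG2 : G⁻¹ * G = 1 := Matrix.nonsing_inv_mul G hGd
  -- (C*Q*Cᵀ) * (C⁻¹ᵀ*Q⁻¹*C⁻¹) = 1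
  have hCd : IsUnit C.det := (Matrix.isUnit_iff_isUnit_det C).mp hC
  have hQd : IsUnit Q.det := (Matrix.isUnit_iff_isUnit_det Q).mp hQ.isUnit
  have hP1 : (C * Q * Cᵀ) * (C⁻¹ᵀ * Q⁻¹ * C⁻¹) = 1 := by
    rw [Matrix.transpose_nonsing_inv]
    calc C * Q * Cᵀ * (Cᵀ⁻¹ * Q⁻¹ * C⁻¹)
        = C * (Q * ((Cᵀ * Cᵀ⁻¹) * (Q⁻¹ * C⁻¹))) := by
          simp only [Matrix.mul_assoc]
      _ = 1 := by
          rw [Matrix.mul_nonsing_inv Cᵀ (by simpa using hCd)]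
          simp only [Matrix.one_mul, ← Matrix.mul_assoc,
            Matrix.mul_nonsing_inv Q hQd, Matrix.one_mul,
            Matrix.mul_nonsing_inv C hCd]
  -- key: (C*Q*Cᵀ) * (Zᵀ*H⁻¹*Z) * G⁻¹ = C*Q*Cᵀ - G⁻¹
  have hkey : (C * Q * Cᵀ) * (Zᵀ * H⁻¹ * Z) * G⁻¹ = C * Q * Cᵀ - G⁻¹ := by
    have : Zᵀ * H⁻¹ * Z = G - C⁻¹ᵀ * Q⁻¹ * C⁻¹ := by rw [hG]; abel
    rw [this, Matrix.mul_sub, Matrix.sub_mul, hP1, Matrix.mul_assoc, hG1,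
      Matrix.mul_one, Matrix.one_mul]
  -- Woodbury
  have hW : Ω * (H⁻¹ - H⁻¹ * Z * G⁻¹ * Zᵀ * H⁻¹) = 1 := by
    rw [hΩ]
    have expand : (H + Z * C * Q * Cᵀ * Zᵀ) * (H⁻¹ - H⁻¹ * Z * G⁻¹ * Zᵀ * H⁻¹)
        = H * H⁻¹ - (H * H⁻¹) * (Z * G⁻¹ * Zᵀ * H⁻¹)
          + Z * (C * Q * Cᵀ) * (Zᵀ * H⁻¹)
          - Z * ((C * Q * Cᵀ) * (Zᵀ * H⁻¹ * Z) * G⁻¹) * (Zᵀ * H⁻¹) := by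
      simp only [Matrix.add_mul, Matrix.mul_sub, Matrix.mul_assoc]
      abel
    rw [expand, hH1, hkey]
    simp only [Matrix.mul_sub, Matrix.sub_mul, Matrix.one_mul, Matrix.mul_assoc]
    abel
  have hΩinv : Ω⁻¹ = H⁻¹ - H⁻¹ * Z * G⁻¹ * Zᵀ * H⁻¹ := Matrix.inv_eq_right_inv hW
  -- Jᵀ Ω⁻¹ = Jᵀ H⁻¹ - B G⁻¹ Zᵀ H⁻¹
  have hJΩ : Jᵀ * Ω⁻¹ = Jᵀ * H⁻¹ - B * G⁻¹ * Zᵀ * H⁻¹ := by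
    rw [hΩinv, Matrix.mul_sub, hB]
    simp only [Matrix.mul_assoc]
  -- Jᵀ Ω⁻¹ J = F
  have hFΩ : Jᵀ * Ω⁻¹ * J = F := by
    rw [hJΩ, Matrix.sub_mul, hF, hB, hE]
    simp only [Matrix.mul_assoc]
  -- C Q Cᵀ Zᵀ Ω⁻¹ = G⁻¹ Zᵀ H⁻¹
  have hK : C * Q * Cᵀ * Zᵀ * Ω⁻¹ = G⁻¹ * Zᵀ * H⁻¹ := by
    have expand : C * Q * Cᵀ * Zᵀ * (H⁻¹ - H⁻¹ * Z * G⁻¹ * Zᵀ * H⁻¹)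
        = (C * Q * Cᵀ) * (Zᵀ * H⁻¹)
          - ((C * Q * Cᵀ) * (Zᵀ * H⁻¹ * Z) * G⁻¹) * (Zᵀ * H⁻¹) := by
      simp only [Matrix.mul_sub, Matrix.mul_assoc]
    rw [hΩinv, expand, hkey, Matrix.sub_mul]
    simp only [Matrix.mul_assoc]
    abel
  -- finish
  rw [Matrix.mul_sub, Matrix.mul_one, hFΩ, hK]
  have hKJ : G⁻¹ * Zᵀ * H⁻¹ * J = G⁻¹ * E := by
    rw [hE]; simp only [Matrix.mul_assoc]
  have : G⁻¹ * Zᵀ * H⁻¹ * (J * F⁻¹ * (Jᵀ * Ω⁻¹))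
      = G⁻¹ * E * F⁻¹ * (Jᵀ * H⁻¹) - G⁻¹ * E * F⁻¹ * (B * G⁻¹ * Zᵀ * H⁻¹) := by
    calc G⁻¹ * Zᵀ * H⁻¹ * (J * F⁻¹ * (Jᵀ * Ω⁻¹))
        = (G⁻¹ * Zᵀ * H⁻¹ * J) * F⁻¹ * (Jᵀ * Ω⁻¹) := by
          simp only [Matrix.mul_assoc]
      _ = G⁻¹ * E * F⁻¹ * (Jᵀ * H⁻¹ - B * G⁻¹ * Zᵀ * H⁻¹) := by rw [hKJ, hJΩ]
      _ = _ := by rw [Matrix.mul_sub]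
  calc -(G⁻¹ * E * F⁻¹ * Jᵀ * H⁻¹) + (G⁻¹ + G⁻¹ * E * F⁻¹ * B * G⁻¹) * Zᵀ * H⁻¹
      = G⁻¹ * Zᵀ * H⁻¹
        - (G⁻¹ * E * F⁻¹ * (Jᵀ * H⁻¹) - G⁻¹ * E * F⁻¹ * (B * G⁻¹ * Zᵀ * H⁻¹)) := by
        simp only [Matrix.add_mul, Matrix.mul_assoc]
        abel
    _ = G⁻¹ * Zᵀ * H⁻¹ - G⁻¹ * Zᵀ * H⁻¹ * (J * F⁻¹ * (Jᵀ * Ω⁻¹)) := by rw [this]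
    _ = G⁻¹ * Zᵀ * H⁻¹ - G⁻¹ * Zᵀ * H⁻¹ * (J * F⁻¹ * Jᵀ * Ω⁻¹) := by
        simp only [Matrix.mul_assoc]
end

section
/- Let Y ∈ ℝⁿ, b₀ ∈ ℝᵐ, and suppose v̂ ∈ ℝᵏ and β̂ ∈ ℝᵐ solve the GLS normal equations of the augmented model: (Jᵀ H⁻¹ J) v̂ + (Jᵀ H⁻¹ Z) β̂ = Jᵀ H⁻¹ Y and (Zᵀ H⁻¹ J) v̂ + G β̂ = Zᵀ H⁻¹ Y + C⁻ᵀ Q⁻¹ b₀. Then v̂ = (Jᵀ Ω⁻¹ J)⁻¹ Jᵀ Ω⁻¹ (Y − Z C b₀); that is, the GLS estimate of the time-invariant intercept vector equals the conditional maximum likelihood estimate (Proposition 2). -/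
open Matrix

lemma posDef_conj_of_isUnit {p : ℕ} (A B : Matrix (Fin p) (Fin p) ℝ)
    (hA : A.PosDef) (hB : IsUnit B) : (Bᵀ * A * B).PosDef := by
  rw [← conjTranspose_eq_transpose_of_trivial]
  cases hB.nonempty_invertible
  refine PosDef.of_dotProduct_mulVec_pos (isHermitian_conjTranspose_mul_mul B hA.1) fun x hx => ?_
  have hBx : B *ᵥ x ≠ 0 := fun h => hx (by
    have := congrArg (fun y => B⁻¹ *ᵥ y) h
    simpa [mulVec_mulVec, nonsing_inv_mul B (isUnit_det_of_invertible B)] using this)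
  simpa only [star_mulVec, dotProduct_mulVec, vecMul_vecMul] using hA.dotProduct_mulVec_pos hBx

/-- Proposition 2: the GLS estimate of the time-invariant intercept vector
obtained from the normal equations of the augmented model equals the
conditional maximum likelihood estimate. -/
theorem gls_intercept_is_mle
    (n m k : ℕ)
    (H : Matrix (Fin n) (Fin n) ℝ) (Q : Matrix (Fin m) (Fin m) ℝ)
    (C : Matrix (Fin m) (Fin m) ℝ) (Z : Matrix (Fin n) (Fin m) ℝ)
    (J : Matrix (Fin n) (Fin k) ℝ)
    (hH : H.PosDef) (hQ : Q.PosDef) (hC : IsUnit C)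
    (Ω : Matrix (Fin n) (Fin n) ℝ) (hΩ : Ω = H + Z * C * Q * Cᵀ * Zᵀ)
    (G : Matrix (Fin m) (Fin m) ℝ) (hG : G = Zᵀ * H⁻¹ * Z + C⁻¹ᵀ * Q⁻¹ * C⁻¹)
    (hJ : IsUnit (Jᵀ * Ω⁻¹ * J))
    (Y : Fin n → ℝ) (b₀ : Fin m → ℝ) (v : Fin k → ℝ) (β : Fin m → ℝ)
    (h1 : (Jᵀ * H⁻¹ * J) *ᵥ v + (Jᵀ * H⁻¹ * Z) *ᵥ β = (Jᵀ * H⁻¹) *ᵥ Y)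
    (h2 : (Zᵀ * H⁻¹ * J) *ᵥ v + G *ᵥ β
            = (Zᵀ * H⁻¹) *ᵥ Y + (C⁻¹ᵀ * Q⁻¹) *ᵥ b₀) :
    v = ((Jᵀ * Ω⁻¹ * J)⁻¹ * Jᵀ * Ω⁻¹) *ᵥ (Y - (Z * C) *ᵥ b₀) := by
  have hHd : IsUnit H.det := (isUnit_iff_isUnit_det H).mp hH.isUnit
  have hQd : IsUnit Q.det := (isUnit_iff_isUnit_det Q).mp hQ.isUnit
  have hCd : IsUnit C.det := (isUnit_iff_isUnit_det C).mp hC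
  haveI := invertibleOfIsUnitDet H hHd
  haveI := invertibleOfIsUnitDet Q hQd
  haveI := invertibleOfIsUnitDet C hCd
  -- G is positive definite
  have hGpd : G.PosDef := by
    rw [hG]
    have hZHZ : (Zᵀ * H⁻¹ * Z).PosSemidef := by
      have := hH.inv.posSemidef.conjTranspose_mul_mul_same Z
      rwa [conjTranspose_eq_transpose_of_trivial] at this
    have hCQC : (C⁻¹ᵀ * Q⁻¹ * C⁻¹).PosDef :=
      posDef_conj_of_isUnit Q⁻¹ C⁻¹ hQ.inv (isUnit_nonsing_inv_iff.mpr hC)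
    exact Matrix.PosDef.posSemidef_add hZHZ hCQC
  have hGd : IsUnit G.det := (isUnit_iff_isUnit_det G).mp hGpd.isUnit
  haveI := invertibleOfIsUnitDet G hGd
  -- Ω is positive definite
  have hΩpd : Ω.PosDef := by
    rw [hΩ]
    have : (Z * C * Q * Cᵀ * Zᵀ) = (Z * C) * Q * (Z * C)ᴴ := by
      rw [conjTranspose_eq_transpose_of_trivial, transpose_mul]
      simp [Matrix.mul_assoc]
    rw [this]
    exact hH.add_posSemidef (hQ.posSemidef.mul_mul_conjTranspose_same (Z * C))
  have hΩd : IsUnit Ω.det := (isUnit_iff_isUnit_det Ω).mp hΩpd.isUnit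
  haveI := invertibleOfIsUnitDet Ω hΩd
  -- key matrix identity: Ω * (H⁻¹ * Z) = Z * C * Q * Cᵀ * G
  have hE1 : Ω * (H⁻¹ * Z) = Z * C * Q * Cᵀ * G := by
    rw [hΩ, hG]
    simp only [transpose_nonsing_inv, Matrix.add_mul, Matrix.mul_add, Matrix.mul_assoc]
    simp
    abel
  -- Woodbury
  set W : Matrix (Fin n) (Fin n) ℝ := H⁻¹ - H⁻¹ * Z * G⁻¹ * Zᵀ * H⁻¹ with hWdef
  have hΩW : Ω * W = 1 := by
    have e1 : Ω * (H⁻¹ * Z * G⁻¹ * Zᵀ * H⁻¹) = Z * C * Q * Cᵀ * Zᵀ * H⁻¹ := by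
      calc Ω * (H⁻¹ * Z * G⁻¹ * Zᵀ * H⁻¹) = Ω * (H⁻¹ * Z) * (G⁻¹ * (Zᵀ * H⁻¹)) := by
            simp [Matrix.mul_assoc]
        _ = Z * C * Q * Cᵀ * G * (G⁻¹ * (Zᵀ * H⁻¹)) := by rw [hE1]
        _ = Z * C * Q * Cᵀ * Zᵀ * H⁻¹ := by simp [Matrix.mul_assoc]
    rw [hWdef, Matrix.mul_sub, e1, hΩ, Matrix.add_mul]
    simp [Matrix.mul_assoc]
  have hW : Ω⁻¹ = W := inv_eq_right_inv hΩW
  -- Ω⁻¹ (Z C) = H⁻¹ Z G⁻¹ C⁻ᵀ Q⁻¹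
  have hZC : Jᵀ * H⁻¹ * Z * G⁻¹ * (C⁻¹ᵀ * Q⁻¹) = Jᵀ * Ω⁻¹ * (Z * C) := by
    have e2 : Ω * (H⁻¹ * Z * G⁻¹ * (C⁻¹ᵀ * Q⁻¹)) = Z * C := by
      calc Ω * (H⁻¹ * Z * G⁻¹ * (C⁻¹ᵀ * Q⁻¹))
          = Ω * (H⁻¹ * Z) * (G⁻¹ * (C⁻¹ᵀ * Q⁻¹)) := by simp [Matrix.mul_assoc]
        _ = Z * C * Q * Cᵀ * G * (G⁻¹ * (C⁻¹ᵀ * Q⁻¹)) := by rw [hE1]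
        _ = Z * C := by
            simp only [transpose_nonsing_inv, Matrix.mul_assoc]
            simp
    have e3 : Ω⁻¹ * (Z * C) = H⁻¹ * Z * G⁻¹ * (C⁻¹ᵀ * Q⁻¹) := by
      rw [← e2, inv_mul_cancel_left_of_invertible]
    rw [Matrix.mul_assoc Jᵀ Ω⁻¹ (Z * C), e3]
    simp [Matrix.mul_assoc]
  have lhs1 : Jᵀ * Ω⁻¹ * J = Jᵀ * H⁻¹ * J - (Jᵀ * H⁻¹ * Z * G⁻¹) * (Zᵀ * H⁻¹ * J) := by
    rw [hW, hWdef]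
    simp only [Matrix.mul_sub, Matrix.sub_mul, Matrix.mul_assoc]
  have rhs1 : Jᵀ * H⁻¹ - Jᵀ * H⁻¹ * Z * G⁻¹ * (Zᵀ * H⁻¹) = Jᵀ * Ω⁻¹ := by
    rw [hW, hWdef]
    simp only [Matrix.mul_sub, Matrix.sub_mul, Matrix.mul_assoc]
  have hGGi : Jᵀ * H⁻¹ * Z * G⁻¹ * G = Jᵀ * H⁻¹ * Z := by
    simp [Matrix.mul_assoc]
  -- vector equations
  have s1 : (Jᵀ * H⁻¹ * J) *ᵥ v = (Jᵀ * H⁻¹) *ᵥ Y - (Jᵀ * H⁻¹ * Z) *ᵥ β := by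
    rw [← h1]; abel
  have s2 : (Zᵀ * H⁻¹ * J) *ᵥ v
      = ((Zᵀ * H⁻¹) *ᵥ Y + (C⁻¹ᵀ * Q⁻¹) *ᵥ b₀) - G *ᵥ β := by
    rw [← h2]; abel
  have hKey : (Jᵀ * Ω⁻¹ * J) *ᵥ v = (Jᵀ * Ω⁻¹) *ᵥ (Y - (Z * C) *ᵥ b₀) := by
    calc (Jᵀ * Ω⁻¹ * J) *ᵥ v
        = (Jᵀ * H⁻¹ * J) *ᵥ v - (Jᵀ * H⁻¹ * Z * G⁻¹) *ᵥ ((Zᵀ * H⁻¹ * J) *ᵥ v) := by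
          rw [lhs1, Matrix.sub_mulVec, mulVec_mulVec]
      _ = ((Jᵀ * H⁻¹) *ᵥ Y - (Jᵀ * H⁻¹ * Z) *ᵥ β)
          - (Jᵀ * H⁻¹ * Z * G⁻¹) *ᵥ
              (((Zᵀ * H⁻¹) *ᵥ Y + (C⁻¹ᵀ * Q⁻¹) *ᵥ b₀) - G *ᵥ β) := by rw [s1, s2]
      _ = (Jᵀ * H⁻¹) *ᵥ Y - (Jᵀ * H⁻¹ * Z * G⁻¹ * (Zᵀ * H⁻¹)) *ᵥ Y
          - (Jᵀ * H⁻¹ * Z * G⁻¹ * (C⁻¹ᵀ * Q⁻¹)) *ᵥ b₀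
          - (Jᵀ * H⁻¹ * Z) *ᵥ β + (Jᵀ * H⁻¹ * Z * G⁻¹ * G) *ᵥ β := by
          simp only [mulVec_sub, mulVec_add, mulVec_mulVec]; abel
      _ = (Jᵀ * H⁻¹ - Jᵀ * H⁻¹ * Z * G⁻¹ * (Zᵀ * H⁻¹)) *ᵥ Y
          - (Jᵀ * H⁻¹ * Z * G⁻¹ * (C⁻¹ᵀ * Q⁻¹)) *ᵥ b₀ := by
          rw [hGGi, Matrix.sub_mulVec]; abel
      _ = (Jᵀ * Ω⁻¹) *ᵥ Y - (Jᵀ * Ω⁻¹ * (Z * C)) *ᵥ b₀ := by rw [rhs1, hZC]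
      _ = (Jᵀ * Ω⁻¹) *ᵥ (Y - (Z * C) *ᵥ b₀) := by rw [mulVec_sub, mulVec_mulVec]
  have hJd : IsUnit (Jᵀ * Ω⁻¹ * J).det := (isUnit_iff_isUnit_det _).mp hJ
  calc v = ((Jᵀ * Ω⁻¹ * J)⁻¹ * (Jᵀ * Ω⁻¹ * J)) *ᵥ v := by
        rw [nonsing_inv_mul _ hJd, one_mulVec]
    _ = (Jᵀ * Ω⁻¹ * J)⁻¹ *ᵥ ((Jᵀ * Ω⁻¹ * J) *ᵥ v) := by rw [← mulVec_mulVec]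
    _ = (Jᵀ * Ω⁻¹ * J)⁻¹ *ᵥ ((Jᵀ * Ω⁻¹) *ᵥ (Y - (Z * C) *ᵥ b₀)) := by rw [hKey]
    _ = ((Jᵀ * Ω⁻¹ * J)⁻¹ * Jᵀ * Ω⁻¹) *ᵥ (Y - (Z * C) *ᵥ b₀) := by
        rw [mulVec_mulVec, Matrix.mul_assoc ((Jᵀ * Ω⁻¹ * J)⁻¹) Jᵀ Ω⁻¹]
end

section
/- Let Y ∈ ℝⁿ, b₀ ∈ ℝᵐ, and suppose v̂ ∈ ℝᵏ and β̂ ∈ ℝᵐ solve the GLS normal equations of the augmented model: (Jᵀ H⁻¹ J) v̂ + (Jᵀ H⁻¹ Z) β̂ = Jᵀ H⁻¹ Y and (Zᵀ H⁻¹ J) v̂ + G β̂ = Zᵀ H⁻¹ Y + C⁻ᵀ Q⁻¹ b₀. Then β̂ = C b₀ + C Q Cᵀ Zᵀ Ω⁻¹ (Y − J v̂ − Z C b₀); that is, the GLS estimate of the stacked time-varying coefficient vector equals the Kalman-smoothed estimate of the model with time-invariant intercepts (Proposition 3). -/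
open Matrix

lemma posDef_conj_aux_s12 {m : ℕ} {Q C : Matrix (Fin m) (Fin m) ℝ}
    (hQ : Q.PosDef) (hC : IsUnit C) : (C * Q * Cᵀ).PosDef := by
  have hQt : Qᵀ = Q := by
    exact (by simpa [Matrix.conjTranspose_eq_transpose_of_trivial] using hQ.1 : Q.IsSymm).eq
  refine Matrix.posDef_iff_dotProduct_mulVec.mpr ⟨?_, ?_⟩
  · show (C * Q * Cᵀ)ᴴ = _
    simp [Matrix.conjTranspose_eq_transpose_of_trivial, Matrix.transpose_mul,
      Matrix.transpose_transpose, hQt, Matrix.mul_assoc]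
  · intro x hx
    have hCx : Cᵀ *ᵥ x ≠ 0 := by
      have hCt : IsUnit Cᵀ := by
        rw [Matrix.isUnit_iff_isUnit_det, Matrix.det_transpose,
          ← Matrix.isUnit_iff_isUnit_det]; exact hC
      intro h
      exact hx ((Matrix.mulVec_injective_iff_isUnit.mpr hCt).eq_iff.mp
        (by simpa using h))
    have := hQ.dotProduct_mulVec_pos hCx
    have key : star x ⬝ᵥ (C * Q * Cᵀ) *ᵥ x
        = star (Cᵀ *ᵥ x) ⬝ᵥ Q *ᵥ (Cᵀ *ᵥ x) := by
      simp only [star_trivial]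
      rw [← Matrix.mulVec_mulVec, ← Matrix.mulVec_mulVec,
        Matrix.dotProduct_mulVec x C, ← Matrix.mulVec_transpose]
    rw [key]
    exact this

/-- Proposition 3: the GLS estimate of the stacked time-varying coefficient
vector equals the Kalman-smoothed estimate of the model with time-invariant
intercepts. -/
theorem gls_coefficients_equal_kalman_smoother_with_intercepts
    (n m k : ℕ)
    (H : Matrix (Fin n) (Fin n) ℝ) (Q : Matrix (Fin m) (Fin m) ℝ)
    (C : Matrix (Fin m) (Fin m) ℝ) (Z : Matrix (Fin n) (Fin m) ℝ)
    (J : Matrix (Fin n) (Fin k) ℝ)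
    (hH : H.PosDef) (hQ : Q.PosDef) (hC : IsUnit C)
    (Ω : Matrix (Fin n) (Fin n) ℝ) (hΩ : Ω = H + Z * C * Q * Cᵀ * Zᵀ)
    (G : Matrix (Fin m) (Fin m) ℝ) (hG : G = Zᵀ * H⁻¹ * Z + C⁻¹ᵀ * Q⁻¹ * C⁻¹)
    (hJ : IsUnit (Jᵀ * Ω⁻¹ * J))
    (Y : Fin n → ℝ) (b₀ : Fin m → ℝ) (v : Fin k → ℝ) (β : Fin m → ℝ)
    (h1 : (Jᵀ * H⁻¹ * J) *ᵥ v + (Jᵀ * H⁻¹ * Z) *ᵥ β = (Jᵀ * H⁻¹) *ᵥ Y)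
    (h2 : (Zᵀ * H⁻¹ * J) *ᵥ v + G *ᵥ β
            = (Zᵀ * H⁻¹) *ᵥ Y + (C⁻¹ᵀ * Q⁻¹) *ᵥ b₀) :
    β = C *ᵥ b₀ + (C * Q * Cᵀ * Zᵀ * Ω⁻¹) *ᵥ (Y - J *ᵥ v - (Z * C) *ᵥ b₀) := by
  have hCd : IsUnit C.det := (Matrix.isUnit_iff_isUnit_det C).mp hC
  have hCTd : IsUnit Cᵀ.det := by rwa [Matrix.det_transpose]
  have hHd : IsUnit H.det := (Matrix.isUnit_iff_isUnit_det H).mp hH.isUnit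
  have hQd : IsUnit Q.det := (Matrix.isUnit_iff_isUnit_det Q).mp hQ.isUnit
  -- Ω is positive definite
  have hS : (C * Q * Cᵀ).PosDef := posDef_conj_aux_s12 hQ hC
  have hΩpd : Ω.PosDef := by
    rw [hΩ]
    refine hH.add_posSemidef ?_
    have := hS.posSemidef.mul_mul_conjTranspose_same Z
    simpa [Matrix.conjTranspose_eq_transpose_of_trivial, Matrix.mul_assoc]
      using this
  have hΩd : IsUnit Ω.det := (Matrix.isUnit_iff_isUnit_det Ω).mp hΩpd.isUnit
  -- the second summand of G is (C * Q * Cᵀ)⁻¹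
  have hSinv : C⁻¹ᵀ * Q⁻¹ * C⁻¹ = (C * Q * Cᵀ)⁻¹ := by
    rw [Matrix.mul_inv_rev, Matrix.mul_inv_rev, Matrix.transpose_nonsing_inv,
      Matrix.mul_assoc]
  -- G is positive definite
  have hGpd : G.PosDef := by
    rw [hG, hSinv]
    refine Matrix.PosDef.posSemidef_add ?_ hS.inv
    have := hH.inv.posSemidef.conjTranspose_mul_mul_same Z
    simpa [Matrix.conjTranspose_eq_transpose_of_trivial] using this
  -- key matrix identity 1
  have e1 : G * (C * Q * Cᵀ * Zᵀ) = Zᵀ * H⁻¹ * Ω := by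
    rw [hG, hΩ, Matrix.transpose_nonsing_inv]
    simp only [Matrix.add_mul, Matrix.mul_add, Matrix.mul_assoc,
      Matrix.nonsing_inv_mul_cancel_left _ _ hCd,
      Matrix.nonsing_inv_mul_cancel_left _ _ hQd,
      Matrix.nonsing_inv_mul_cancel_left _ _ hCTd,
      Matrix.nonsing_inv_mul_cancel_left _ _ hHd,
      Matrix.nonsing_inv_mul _ hHd, Matrix.mul_one]
    abel
  have K1 : G * (C * Q * Cᵀ * Zᵀ * Ω⁻¹) = Zᵀ * H⁻¹ := by
    calc G * (C * Q * Cᵀ * Zᵀ * Ω⁻¹) = G * (C * Q * Cᵀ * Zᵀ) * Ω⁻¹ := by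
          simp [Matrix.mul_assoc]
      _ = Zᵀ * H⁻¹ * Ω * Ω⁻¹ := by rw [e1]
      _ = Zᵀ * H⁻¹ := by
          rw [Matrix.mul_assoc (Zᵀ * H⁻¹), Matrix.mul_nonsing_inv _ hΩd,
            Matrix.mul_one]
  -- key matrix identity 2
  have K2 : G * C = Zᵀ * H⁻¹ * Z * C + C⁻¹ᵀ * Q⁻¹ := by
    rw [hG]
    simp only [Matrix.add_mul, Matrix.mul_assoc, Matrix.nonsing_inv_mul _ hCd,
      Matrix.mul_one]
  -- rearranged normal equation
  have h2' : G *ᵥ β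
      = (Zᵀ * H⁻¹) *ᵥ Y + (C⁻¹ᵀ * Q⁻¹) *ᵥ b₀ - (Zᵀ * H⁻¹ * J) *ᵥ v := by
    rw [← h2]; abel
  -- conclude by injectivity of multiplication by G
  have hinj : Function.Injective (G *ᵥ ·) :=
    Matrix.mulVec_injective_iff_isUnit.mpr hGpd.isUnit
  apply hinj
  show G *ᵥ β = G *ᵥ _
  rw [Matrix.mulVec_add, Matrix.mulVec_mulVec, Matrix.mulVec_mulVec, K1, K2,
    h2']
  simp only [Matrix.add_mulVec, Matrix.mulVec_sub, Matrix.mul_assoc,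
    ← Matrix.mulVec_mulVec]
  abel
end

section
/- With B = Jᵀ H⁻¹ Z, E = Zᵀ H⁻¹ J, and F = Jᵀ H⁻¹ J − B G⁻¹ E assumed invertible, the off-diagonal (covariance) block of the inverse of the block normal matrix satisfies G⁻¹ E F⁻¹ = C Q Cᵀ Zᵀ Ω⁻¹ J (Jᵀ Ω⁻¹ J)⁻¹. -/
open Matrix

lemma aux_posDef_conj {m : ℕ} {Q : Matrix (Fin m) (Fin m) ℝ} (hQ : Q.PosDef)
    {C : Matrix (Fin m) (Fin m) ℝ} (hC : IsUnit C) : (C * Q * Cᵀ).PosDef := by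
  rw [posDef_iff_dotProduct_mulVec]
  constructor
  · rw [show Cᵀ = Cᴴ from (conjTranspose_eq_transpose_of_trivial C).symm]
    exact isHermitian_mul_mul_conjTranspose C hQ.isHermitian
  · intro x hx
    have hCTu : IsUnit Cᵀ := (Matrix.isUnit_transpose C).mpr hC
    have hxC : Cᵀ *ᵥ x ≠ 0 := by
      intro h
      exact hx (Matrix.mulVec_injective_iff_isUnit.mpr hCTu (by simpa using h))
    have hpos := hQ.dotProduct_mulVec_pos hxC
    calc (0:ℝ) < dotProduct (star (Cᵀ *ᵥ x)) (Q *ᵥ (Cᵀ *ᵥ x)) := hpos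
      _ = dotProduct (star x) ((C * Q * Cᵀ) *ᵥ x) := by
          simp only [star_trivial, ← Matrix.mulVec_mulVec]
          simp only [Matrix.mulVec_transpose, Matrix.dotProduct_mulVec]

/-- The off-diagonal (covariance) block of the inverse of the block normal
matrix: G⁻¹ E F⁻¹ = C Q Cᵀ Zᵀ Ω⁻¹ J (Jᵀ Ω⁻¹ J)⁻¹. -/
theorem covariance_block_identity_left
    (n m k : ℕ)
    (H : Matrix (Fin n) (Fin n) ℝ) (Q : Matrix (Fin m) (Fin m) ℝ)
    (C : Matrix (Fin m) (Fin m) ℝ) (Z : Matrix (Fin n) (Fin m) ℝ)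
    (J : Matrix (Fin n) (Fin k) ℝ)
    (hH : H.PosDef) (hQ : Q.PosDef) (hC : IsUnit C)
    (Ω : Matrix (Fin n) (Fin n) ℝ) (hΩ : Ω = H + Z * C * Q * Cᵀ * Zᵀ)
    (G : Matrix (Fin m) (Fin m) ℝ) (hG : G = Zᵀ * H⁻¹ * Z + C⁻¹ᵀ * Q⁻¹ * C⁻¹)
    (hJ : IsUnit (Jᵀ * Ω⁻¹ * J))
    (B : Matrix (Fin k) (Fin m) ℝ) (hB : B = Jᵀ * H⁻¹ * Z)
    (E : Matrix (Fin m) (Fin k) ℝ) (hE : E = Zᵀ * H⁻¹ * J)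
    (F : Matrix (Fin k) (Fin k) ℝ)
    (hF : F = Jᵀ * H⁻¹ * J - B * G⁻¹ * E)
    (hFu : IsUnit F) :
    G⁻¹ * E * F⁻¹ = C * Q * Cᵀ * Zᵀ * Ω⁻¹ * J * (Jᵀ * Ω⁻¹ * J)⁻¹ := by
  set S : Matrix (Fin m) (Fin m) ℝ := C * Q * Cᵀ with hS
  have hSpd : S.PosDef := aux_posDef_conj hQ hC
  have hSu : IsUnit S := hSpd.isUnit
  have hSinv : S⁻¹ = C⁻¹ᵀ * Q⁻¹ * C⁻¹ := by
    rw [hS, Matrix.mul_inv_rev, Matrix.mul_inv_rev, Matrix.transpose_nonsing_inv,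
      Matrix.mul_assoc]
  have hGform : G = S⁻¹ + Zᵀ * H⁻¹ * Z := by
    rw [hG, hSinv, add_comm]
  have hZHZ : (Zᵀ * H⁻¹ * Z).PosSemidef := by
    have := hH.inv.posSemidef.conjTranspose_mul_mul_same Z
    simpa [conjTranspose_eq_transpose_of_trivial] using this
  have hGpd : G.PosDef := by
    rw [hG]
    exact Matrix.PosDef.posSemidef_add hZHZ (by rw [← hSinv]; exact hSpd.inv)
  have hGu : IsUnit G := hGpd.isUnit
  have hΩinv : Ω⁻¹ = H⁻¹ - H⁻¹ * Z * G⁻¹ * Zᵀ * H⁻¹ := by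
    have h1 : Ω = H + Z * S * Zᵀ := by rw [hΩ, hS]; simp [Matrix.mul_assoc]
    rw [h1, Matrix.add_mul_mul_inv_eq_sub _ _ _ _ hH.isUnit hSu
      (by rw [← hGform]; exact hGu), ← hGform]
  have hGG : G * G⁻¹ = 1 := Matrix.mul_nonsing_inv G (Matrix.isUnit_iff_isUnit_det G |>.mp hGu)
  have hSS : S * S⁻¹ = 1 := Matrix.mul_nonsing_inv S (Matrix.isUnit_iff_isUnit_det S |>.mp hSu)
  -- key identity: S * Zᵀ * Ω⁻¹ = G⁻¹ * Zᵀ * H⁻¹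
  have hkey : S * (Zᵀ * Ω⁻¹) = G⁻¹ * (Zᵀ * H⁻¹) := by
    have h2 : Zᵀ * Ω⁻¹ = (1 - (Zᵀ * H⁻¹ * Z) * G⁻¹) * (Zᵀ * H⁻¹) := by
      rw [hΩinv]
      simp only [Matrix.mul_sub, Matrix.sub_mul, Matrix.one_mul, Matrix.mul_assoc]
    have h3 : (1 : Matrix (Fin m) (Fin m) ℝ) - (Zᵀ * H⁻¹ * Z) * G⁻¹ = S⁻¹ * G⁻¹ := by
      rw [← hGG, hGform]
      simp only [Matrix.add_mul, Matrix.mul_assoc, add_sub_cancel_right]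
    rw [h2, h3]
    simp only [← Matrix.mul_assoc]
    rw [hSS, Matrix.one_mul]
  have hFeq : Jᵀ * Ω⁻¹ * J = F := by
    rw [hΩinv, hF, hB, hE]
    simp only [Matrix.mul_sub, Matrix.sub_mul, Matrix.mul_assoc]
  calc G⁻¹ * E * F⁻¹
      = G⁻¹ * (Zᵀ * H⁻¹) * J * F⁻¹ := by rw [hE]; simp [Matrix.mul_assoc]
    _ = S * (Zᵀ * Ω⁻¹) * J * F⁻¹ := by rw [hkey]
    _ = C * Q * Cᵀ * Zᵀ * Ω⁻¹ * J * (Jᵀ * Ω⁻¹ * J)⁻¹ := by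
        rw [hFeq, hS]; simp [Matrix.mul_assoc]
end

section
/- With B = Jᵀ H⁻¹ Z, E = Zᵀ H⁻¹ J, and F = Jᵀ H⁻¹ J − B G⁻¹ E assumed invertible, the off-diagonal (covariance) block of the inverse of the block normal matrix satisfies F⁻¹ B G⁻¹ = (Jᵀ Ω⁻¹ J)⁻¹ Jᵀ Ω⁻¹ Z C Q Cᵀ. -/
open Matrix

lemma posdef_conj_aux {m : ℕ} {A B : Matrix (Fin m) (Fin m) ℝ}
    (hA : A.PosDef) (hB : IsUnit B) : (B * A * Bᵀ).PosDef := by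
  have hps := hA.posSemidef.mul_mul_conjTranspose_same B
  rw [conjTranspose_eq_transpose_of_trivial] at hps
  refine Matrix.PosDef.of_dotProduct_mulVec_pos hps.isHermitian fun x hx => ?_
  have hBT : IsUnit Bᵀ := by
    rw [Matrix.isUnit_iff_isUnit_det, Matrix.det_transpose,
      ← Matrix.isUnit_iff_isUnit_det]; exact hB
  have hx' : Bᵀ *ᵥ x ≠ 0 := by
    intro h
    exact hx ((Matrix.mulVec_injective_iff_isUnit.mpr hBT).eq_iff.mp (by simpa using h))
  have key : (star x) ⬝ᵥ ((B * A * Bᵀ) *ᵥ x) = (star (Bᵀ *ᵥ x)) ⬝ᵥ (A *ᵥ (Bᵀ *ᵥ x)) := by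
    simp only [star_trivial, ← mulVec_mulVec, dotProduct_mulVec, mulVec_transpose, vecMul_vecMul]
  rw [key]
  exact hA.dotProduct_mulVec_pos hx'

/-- The off-diagonal (covariance) block of the inverse of the block normal
matrix: F⁻¹ B G⁻¹ = (Jᵀ Ω⁻¹ J)⁻¹ Jᵀ Ω⁻¹ Z C Q Cᵀ. -/
theorem covariance_block_identity_right
    (n m k : ℕ)
    (H : Matrix (Fin n) (Fin n) ℝ) (Q : Matrix (Fin m) (Fin m) ℝ)
    (C : Matrix (Fin m) (Fin m) ℝ) (Z : Matrix (Fin n) (Fin m) ℝ)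
    (J : Matrix (Fin n) (Fin k) ℝ)
    (hH : H.PosDef) (hQ : Q.PosDef) (hC : IsUnit C)
    (Ω : Matrix (Fin n) (Fin n) ℝ) (hΩ : Ω = H + Z * C * Q * Cᵀ * Zᵀ)
    (G : Matrix (Fin m) (Fin m) ℝ) (hG : G = Zᵀ * H⁻¹ * Z + C⁻¹ᵀ * Q⁻¹ * C⁻¹)
    (hJ : IsUnit (Jᵀ * Ω⁻¹ * J))
    (B : Matrix (Fin k) (Fin m) ℝ) (hB : B = Jᵀ * H⁻¹ * Z)
    (E : Matrix (Fin m) (Fin k) ℝ) (hE : E = Zᵀ * H⁻¹ * J)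
    (F : Matrix (Fin k) (Fin k) ℝ)
    (hF : F = Jᵀ * H⁻¹ * J - B * G⁻¹ * E)
    (hFu : IsUnit F) :
    F⁻¹ * B * G⁻¹ = (Jᵀ * Ω⁻¹ * J)⁻¹ * Jᵀ * Ω⁻¹ * Z * C * Q * Cᵀ := by
  have hCQC : (C * Q * Cᵀ).PosDef := posdef_conj_aux hQ hC
  have hCi : IsUnit C⁻¹ := Matrix.isUnit_nonsing_inv_iff.mpr hC
  have hCiT : IsUnit (C⁻¹ᵀ) := by
    rw [Matrix.isUnit_iff_isUnit_det, Matrix.det_transpose,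
      ← Matrix.isUnit_iff_isUnit_det]; exact hCi
  have hGc : (C⁻¹ᵀ * Q⁻¹ * C⁻¹).PosDef := by
    have := posdef_conj_aux hQ.inv hCiT
    rwa [transpose_transpose] at this
  have hZHZ : (Zᵀ * H⁻¹ * Z).PosSemidef := by
    have := hH.inv.posSemidef.mul_mul_conjTranspose_same Zᵀ
    rwa [conjTranspose_eq_transpose_of_trivial, transpose_transpose] at this
  have hGpd : G.PosDef := by rw [hG]; exact Matrix.PosDef.posSemidef_add hZHZ hGc
  have hΩpd : Ω.PosDef := by
    rw [hΩ]
    refine hH.add_posSemidef ?_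
    have := hCQC.posSemidef.mul_mul_conjTranspose_same Z
    rw [conjTranspose_eq_transpose_of_trivial] at this
    have e : Z * (C * Q * Cᵀ) * Zᵀ = Z * C * Q * Cᵀ * Zᵀ := by
      simp only [Matrix.mul_assoc]
    rwa [e] at this
  have hHu : IsUnit H := hH.isUnit
  have hHH : H * H⁻¹ = 1 := Matrix.mul_nonsing_inv _ ((Matrix.isUnit_iff_isUnit_det _).mp hHu)
  have hGG : G * G⁻¹ = 1 :=
    Matrix.mul_nonsing_inv _ ((Matrix.isUnit_iff_isUnit_det _).mp hGpd.isUnit)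
  have hΩΩ' : Ω⁻¹ * Ω = 1 :=
    Matrix.nonsing_inv_mul _ ((Matrix.isUnit_iff_isUnit_det _).mp hΩpd.isUnit)
  have hQQ : Q * Q⁻¹ = 1 :=
    Matrix.mul_nonsing_inv _ ((Matrix.isUnit_iff_isUnit_det _).mp hQ.isUnit)
  have hCC : C * C⁻¹ = 1 :=
    Matrix.mul_nonsing_inv _ ((Matrix.isUnit_iff_isUnit_det _).mp hC)
  have hCTC : Cᵀ * C⁻¹ᵀ = 1 := by
    rw [← Matrix.transpose_mul,
      Matrix.nonsing_inv_mul _ ((Matrix.isUnit_iff_isUnit_det _).mp hC), Matrix.transpose_one]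
  -- key : Z*C*Q*Cᵀ * G = Ω * (H⁻¹ * Z)
  have key : Z * C * Q * Cᵀ * G = Ω * (H⁻¹ * Z) := by
    rw [hG, hΩ, Matrix.mul_add, Matrix.add_mul]
    simp only [Matrix.mul_assoc]
    rw [← Matrix.mul_assoc Cᵀ C⁻¹ᵀ, hCTC, Matrix.one_mul,
      ← Matrix.mul_assoc Q Q⁻¹, hQQ, Matrix.one_mul, hCC, Matrix.mul_one,
      ← Matrix.mul_assoc H H⁻¹, hHH, Matrix.one_mul, add_comm]
  -- key2 : H⁻¹ * Z * G⁻¹ = Ω⁻¹ * (Z*C*Q*Cᵀ)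
  have key2 : H⁻¹ * Z * G⁻¹ = Ω⁻¹ * (Z * C * Q * Cᵀ) := by
    calc H⁻¹ * Z * G⁻¹ = Ω⁻¹ * (Ω * (H⁻¹ * Z)) * G⁻¹ := by
          rw [← Matrix.mul_assoc, hΩΩ', Matrix.one_mul, Matrix.mul_assoc]
      _ = Ω⁻¹ * (Z * C * Q * Cᵀ * G) * G⁻¹ := by rw [key]
      _ = Ω⁻¹ * (Z * C * Q * Cᵀ) * (G * G⁻¹) := by simp only [Matrix.mul_assoc]
      _ = Ω⁻¹ * (Z * C * Q * Cᵀ) := by rw [hGG, Matrix.mul_one]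
  -- Woodbury
  have wood : Ω⁻¹ = H⁻¹ - H⁻¹ * Z * G⁻¹ * (Zᵀ * H⁻¹) := by
    have h2 : Ω⁻¹ * Ω * H⁻¹ = Ω⁻¹ + Ω⁻¹ * (Z * C * Q * Cᵀ) * (Zᵀ * H⁻¹) := by
      rw [hΩ, Matrix.mul_add, Matrix.add_mul]
      simp only [Matrix.mul_assoc]
      rw [hHH, Matrix.mul_one]
    rw [hΩΩ', Matrix.one_mul, ← key2] at h2
    exact eq_sub_of_add_eq h2.symm
  -- F = Jᵀ * Ω⁻¹ * J
  have hFΩ : F = Jᵀ * Ω⁻¹ * J := by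
    rw [hF, hB, hE, wood, Matrix.mul_sub, Matrix.sub_mul]
    simp only [Matrix.mul_assoc]
  rw [← hFΩ, hB]
  calc F⁻¹ * (Jᵀ * H⁻¹ * Z) * G⁻¹ = F⁻¹ * (Jᵀ * (H⁻¹ * Z * G⁻¹)) := by
        simp only [Matrix.mul_assoc]
    _ = F⁻¹ * (Jᵀ * (Ω⁻¹ * (Z * C * Q * Cᵀ))) := by rw [key2]
    _ = F⁻¹ * Jᵀ * Ω⁻¹ * Z * C * Q * Cᵀ := by simp only [Matrix.mul_assoc]
end

section
/- The difference between the GLS-based variance and the Kalman-smoother mean squared error, namely the m×m matrix C Q Cᵀ Zᵀ Ω⁻¹ J (Jᵀ Ω⁻¹ J)⁻¹ Jᵀ Ω⁻¹ Z C Q Cᵀ, is symmetric positive semidefinite; hence the GLS variance dominates the Kalman-smoother MSE in the Loewner order. -/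
open Matrix

lemma aux_posDef_conj_s16 {n k : ℕ} (P : Matrix (Fin n) (Fin n) ℝ)
    (J : Matrix (Fin n) (Fin k) ℝ) (hP : P.PosDef)
    (hU : IsUnit (Jᵀ * P * J)) : (Jᵀ * P * J).PosDef := by
  rw [posDef_iff_dotProduct_mulVec]
  constructor
  · have : (Jᵀ * P * J)ᴴ = Jᵀ * P * J := by
      have hPt : Pᵀ = P := by
        rw [← conjTranspose_eq_transpose_of_trivial, hP.1.eq]
      simp [conjTranspose_mul, Matrix.mul_assoc, hPt]
    exact this
  · intro x hx
    rcases eq_or_ne (J *ᵥ x) 0 with h0 | h0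
    · exfalso
      apply hx
      have hzero : (Jᵀ * P * J) *ᵥ x = 0 := by
        rw [Matrix.mul_assoc, ← mulVec_mulVec, ← mulVec_mulVec, h0]
        simp
      have := hU.invertible
      have : ((Jᵀ * P * J)⁻¹ * (Jᵀ * P * J)) *ᵥ x = 0 := by
        rw [← mulVec_mulVec, hzero]; simp
      simpa [Matrix.inv_mul_of_invertible] using this
    · have key : star x ⬝ᵥ (Jᵀ * P * J) *ᵥ x
          = star (J *ᵥ x) ⬝ᵥ P *ᵥ (J *ᵥ x) := by
        rw [Matrix.mul_assoc, ← mulVec_mulVec, ← mulVec_mulVec,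
          dotProduct_mulVec, vecMul_transpose]
        simp [star_trivial]
      rw [key]
      exact hP.dotProduct_mulVec_pos h0

/-- The difference between the GLS-based variance and the Kalman-smoother
mean squared error, C Q Cᵀ Zᵀ Ω⁻¹ J (Jᵀ Ω⁻¹ J)⁻¹ Jᵀ Ω⁻¹ Z C Q Cᵀ, is symmetric
positive semidefinite; hence the GLS variance dominates the Kalman-smoother
MSE in the Loewner order. -/
theorem gls_variance_minus_kalman_mse_posSemidef
    (n m k : ℕ)
    (H : Matrix (Fin n) (Fin n) ℝ) (Q : Matrix (Fin m) (Fin m) ℝ)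
    (C : Matrix (Fin m) (Fin m) ℝ) (Z : Matrix (Fin n) (Fin m) ℝ)
    (J : Matrix (Fin n) (Fin k) ℝ)
    (hH : H.PosDef) (hQ : Q.PosDef) (hC : IsUnit C)
    (Ω : Matrix (Fin n) (Fin n) ℝ) (hΩ : Ω = H + Z * C * Q * Cᵀ * Zᵀ)
    (hJ : IsUnit (Jᵀ * Ω⁻¹ * J)) :
    (C * Q * Cᵀ * Zᵀ * Ω⁻¹ * J * (Jᵀ * Ω⁻¹ * J)⁻¹ * Jᵀ * Ω⁻¹ * Z * C * Q * Cᵀ).PosSemidef := by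
  have hΩpd : Ω.PosDef := by
    rw [hΩ]
    apply hH.add_posSemidef
    have : Z * C * Q * Cᵀ * Zᵀ = (Z * C) * Q * (Z * C)ᴴ := by
      simp [Matrix.mul_assoc, conjTranspose_mul]
    rw [this]
    exact hQ.posSemidef.mul_mul_conjTranspose_same (Z * C)
  have hΩi : (Ω⁻¹).PosDef := hΩpd.inv
  have hX : (Jᵀ * Ω⁻¹ * J).PosDef := aux_posDef_conj_s16 _ _ hΩi hJ
  have hB : ((Jᵀ * Ω⁻¹ * J)⁻¹).PosSemidef := hX.inv.posSemidef
  have heq : C * Q * Cᵀ * Zᵀ * Ω⁻¹ * J * (Jᵀ * Ω⁻¹ * J)⁻¹ * Jᵀ * Ω⁻¹ * Z * C * Q * Cᵀ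
      = (C * Q * Cᵀ * Zᵀ * Ω⁻¹ * J) * (Jᵀ * Ω⁻¹ * J)⁻¹ * (C * Q * Cᵀ * Zᵀ * Ω⁻¹ * J)ᴴ := by
    have h1 : Ω⁻¹ᵀ = Ω⁻¹ := by
      rw [← conjTranspose_eq_transpose_of_trivial, hΩi.1.eq]
    have h2 : Qᵀ = Q := by
      rw [← conjTranspose_eq_transpose_of_trivial, hQ.1.eq]
    simp [conjTranspose_mul, h1, h2, Matrix.mul_assoc]
  rw [heq]
  exact hB.mul_mul_conjTranspose_same _
end
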